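/- Let p_M ∈ (0,1) satisfy 1 − F(p_M) = p_M·f(p_M). Suppose there exists B > 0 with F(v)/f(v) < B for all v ∈ (0,1], and suppose J > 1 + B/p_M. Then D_C(p_M) < 0, where D_C(p) = (1−λ)·(1 − F(p) − p·f(p)) + λ·J·∫_p^1 ( F(v)^{J−1} − p·(J−1)·F(v)^{J−2}·f(v) )·f(v) dv. Moreover, if in addition D_C is strictly antitone on (0,1), then any p_C ∈ (0,1) with D_C(p_C) = 0 satisfies p_C < p_M. (With sufficiently many firms, the independent managed-campaign candidate price falls below the monopoly price, so the equilibrium posted price p_I = max(p_C, p_M) equals p_M.) -/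
import Mathlib


open intervalIntegral

/-- With a bounded inverse likelihood ratio F/f < B and
sufficiently many firms (J > 1 + B/p_M), the independent managed-campaign
first-order condition is negative at the monopoly price, so (if D_C is
strictly decreasing) the candidate price p_C falls below p_M. -/
theorem independent_campaign_price_below_monopoly
    (f F : ℝ → ℝ)
    (hf_cont : ContinuousOn f (Set.Icc 0 1))
    (hf_pos : ∀ x ∈ Set.Icc (0:ℝ) 1, 0 < f x)
    (hf_logconcave : ConcaveOn ℝ (Set.Icc 0 1) (Real.log ∘ f))
    (hf_int : (∫ t in (0:ℝ)..1, f t) = 1)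
    (hF : ∀ x, F x = ∫ t in (0:ℝ)..x, f t)
    (J : ℕ) (hJ : 2 ≤ J)
    (lam : ℝ) (hlam : lam ∈ Set.Ioo (0:ℝ) 1)
    (pM : ℝ) (hpM : pM ∈ Set.Ioo (0:ℝ) 1) (hM : 1 - F pM = pM * f pM)
    (B : ℝ) (hB : 0 < B) (hFf : ∀ v ∈ Set.Ioc (0:ℝ) 1, F v / f v < B)
    (hJbig : 1 + B / pM < (J : ℝ))
    (DC : ℝ → ℝ)
    (hDC : ∀ p, DC p = (1 - lam) * (1 - F p - p * f p)
        + lam * (J : ℝ) * ∫ v in p..1,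
            (F v ^ (J - 1) - p * (((J : ℝ) - 1) * F v ^ (J - 2) * f v)) * f v) :
    DC pM < 0 ∧
    (StrictAntiOn DC (Set.Ioo 0 1) →
      ∀ pC ∈ Set.Ioo (0:ℝ) 1, DC pC = 0 → pC < pM) := by
  obtain ⟨hpM0, hpM1⟩ := hpM
  -- F is continuous on [0,1]
  have hFint : MeasureTheory.IntegrableOn f (Set.Icc 0 1) :=
    hf_cont.integrableOn_Icc
  have hFcont : ContinuousOn F (Set.Icc 0 1) := by
    have h := intervalIntegral.continuousOn_primitive_interval
      (a := (0:ℝ)) (b := 1) (f := f) (by simpa using hFint)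
    have : Set.uIcc (0:ℝ) 1 = Set.Icc 0 1 := by
      rw [Set.uIcc_of_le]; norm_num
    rw [this] at h
    refine h.congr ?_
    intro x hx
    exact hF x
  -- F is positive on (0,1]
  have hFpos : ∀ v ∈ Set.Ioc (0:ℝ) 1, 0 < F v := by
    intro v hv
    rw [hF v]
    apply intervalIntegral.intervalIntegral_pos_of_pos_on
    · exact (hf_cont.mono (Set.Icc_subset_Icc le_rfl hv.2)).intervalIntegrable_of_Icc hv.1.le
    · intro x hx
      exact hf_pos x ⟨hx.1.le, hx.2.le.trans hv.2⟩
    · exact hv.1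
  -- key bound: B < pM * (J-1)
  have hkey : B < pM * ((J:ℝ) - 1) := by
    have h1 : B / pM < (J:ℝ) - 1 := by linarith
    calc B = (B / pM) * pM := by field_simp
    _ < ((J:ℝ) - 1) * pM := by
        exact mul_lt_mul_of_pos_right h1 hpM0
    _ = pM * ((J:ℝ) - 1) := mul_comm _ _
  -- the integral is negative
  set g : ℝ → ℝ := fun v =>
    (F v ^ (J - 1) - pM * (((J:ℝ) - 1) * F v ^ (J - 2) * f v)) * f v with hg
  have hgcont : ContinuousOn g (Set.Icc pM 1) := by
    have hsub : Set.Icc pM 1 ⊆ Set.Icc (0:ℝ) 1 :=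
      Set.Icc_subset_Icc hpM0.le le_rfl
    have hFc := hFcont.mono hsub
    have hfc := hf_cont.mono hsub
    exact (((hFc.pow _).sub (continuousOn_const.mul
      ((continuousOn_const.mul (hFc.pow _)).mul hfc))).mul hfc)
  have hgneg : ∀ v ∈ Set.Ioo pM 1, 0 < -g v := by
    intro v hv
    have hv01 : v ∈ Set.Ioc (0:ℝ) 1 := ⟨hpM0.trans hv.1, hv.2.le⟩
    have hfv : 0 < f v := hf_pos v ⟨hv01.1.le, hv01.2⟩
    have hFv : 0 < F v := hFpos v hv01
    have hFB : F v < B * f v := by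
      have := hFf v hv01
      rw [div_lt_iff₀ hfv] at this
      linarith
    have hpow : F v ^ (J - 1) = F v ^ (J - 2) * F v := by
      have : J - 1 = (J - 2) + 1 := by omega
      rw [this, pow_succ]
    have hFpow : 0 < F v ^ (J - 2) := pow_pos hFv _
    have : F v ^ (J - 1) < pM * (((J:ℝ) - 1) * F v ^ (J - 2) * f v) := by
      rw [hpow]
      calc F v ^ (J - 2) * F v < F v ^ (J - 2) * (B * f v) :=
            mul_lt_mul_of_pos_left hFB hFpow
      _ < F v ^ (J - 2) * (pM * ((J:ℝ) - 1) * f v) := by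
            apply mul_lt_mul_of_pos_left _ hFpow
            exact mul_lt_mul_of_pos_right hkey hfv
      _ = pM * (((J:ℝ) - 1) * F v ^ (J - 2) * f v) := by ring
    simp only [hg]
    nlinarith
  have hInt : (∫ v in pM..1, g v) < 0 := by
    have hgi : IntervalIntegrable g MeasureTheory.volume pM 1 :=
      hgcont.intervalIntegrable_of_Icc hpM1.le
    have hpos : 0 < ∫ v in pM..1, -g v := by
      apply intervalIntegral.intervalIntegral_pos_of_pos_on hgi.neg hgneg hpM1
    rw [intervalIntegral.integral_neg] at hpos
    linarith
  have hDCpM : DC pM < 0 := by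
    rw [hDC pM, hM]
    have hJ0 : 0 < (J:ℝ) := by positivity
    have hmul : lam * (J:ℝ) * ∫ v in pM..1, g v < 0 :=
      mul_neg_of_pos_of_neg (mul_pos hlam.1 hJ0) hInt
    simp only [hg] at hmul
    nlinarith [hmul]
  refine ⟨hDCpM, ?_⟩
  intro hanti pC hpC hpC0
  by_contra h
  push_neg at h
  rcases eq_or_lt_of_le h with heq | hlt
  · rw [← heq] at hpC0; linarith
  · have := hanti ⟨hpM0, hpM1⟩ hpC hlt
    linarith
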